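/- If H ∈ F_2^{r×n} contains a subset of rows H_1 such that C(H_1) = C(H) and the Tanner graph T(H_1) is cycle-free, then the set of pseudocodewords of H equals the set of nonnegative-integer combinations of codewords of C(H). -/

import Mathlib

open Finset

/-- The Tanner graph of a binary matrix `H`: bit nodes are columns (`Sum.inl`),
check nodes are rows (`Sum.inr`), with an edge whenever the entry is 1. -/
def tanner {r n : ℕ} (H : Matrix (Fin r) (Fin n) (ZMod 2)) :
    SimpleGraph (Fin n ⊕ Fin r) where
  Adj v w :=
    (∃ i j, v = Sum.inl i ∧ w = Sum.inr j ∧ H j i = 1) ∨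
    (∃ i j, v = Sum.inr j ∧ w = Sum.inl i ∧ H j i = 1)
  symm := by
    constructor
    rintro v w (⟨i, j, h1, h2, h3⟩ | ⟨i, j, h1, h2, h3⟩)
    · exact Or.inr ⟨i, j, h2, h1, h3⟩
    · exact Or.inl ⟨i, j, h2, h1, h3⟩
  loopless := by
    constructor
    rintro v (⟨i, j, h1, h2, _⟩ | ⟨i, j, h1, h2, _⟩) <;> subst h1 <;> simp at h2

/-- Membership in the fundamental cone `K(H)` for integer vectors. -/
def inConeZ {r n : ℕ} (H : Matrix (Fin r) (Fin n) (ZMod 2)) (p : Fin n → ℤ) : Prop :=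
  (∀ i, 0 ≤ p i) ∧
  ∀ j i, (if H j i = 1 then p i else 0) ≤
    ∑ l ∈ Finset.univ.erase i, (if H j l = 1 then p l else 0)

/-- `H pᵀ ≡ 0 (mod 2)`. -/
def parityOK {r n : ℕ} (H : Matrix (Fin r) (Fin n) (ZMod 2)) (p : Fin n → ℤ) : Prop :=
  ∀ j, (∑ i, (if H j i = 1 then p i else 0)) % 2 = 0

/-- Graph-cover pseudocodeword, via the Koetter–Li–Vontobel–Walker characterization. -/
def isPseudo {r n : ℕ} (H : Matrix (Fin r) (Fin n) (ZMod 2)) (p : Fin n → ℤ) : Prop :=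
  inConeZ H p ∧ parityOK H p

/-- `p` is a finite nonnegative-integer combination of codewords of `C(H)`. -/
def isComb {r n : ℕ} (H : Matrix (Fin r) (Fin n) (ZMod 2)) (p : Fin n → ℤ) : Prop :=
  ∃ a : (Fin n → ZMod 2) → ℕ,
    ∀ i, p i =
      ∑ c : Fin n → ZMod 2,
        (if H.mulVec c = 0 then (a c : ℤ) * ((c i).val : ℤ) else 0)

/-- `H` is geometrically perfect. -/
def geomPerfect {r n : ℕ} (H : Matrix (Fin r) (Fin n) (ZMod 2)) : Prop :=
  ∀ p, isPseudo H p ↔ isComb H p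

section Basic

variable {r n : ℕ}

lemma zmod2_cases (x : ZMod 2) : x = 0 ∨ x = 1 := by
  fin_cases x <;> [exact Or.inl rfl; exact Or.inr rfl]

lemma zmod2_val_le_one (x : ZMod 2) : x.val ≤ 1 := by
  rcases zmod2_cases x with h | h <;> simp [h] <;> rfl

lemma tanner_adj_lr {M : Matrix (Fin r) (Fin n) (ZMod 2)} {i : Fin n} {j : Fin r}
    (h : M j i = 1) : (tanner M).Adj (Sum.inl i) (Sum.inr j) :=
  Or.inl ⟨i, j, rfl, rfl, h⟩

lemma tanner_adj_rl {M : Matrix (Fin r) (Fin n) (ZMod 2)} {i : Fin n} {j : Fin r}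
    (h : M j i = 1) : (tanner M).Adj (Sum.inr j) (Sum.inl i) :=
  Or.inr ⟨i, j, rfl, rfl, h⟩

lemma tanner_le {M₀ M : Matrix (Fin r) (Fin n) (ZMod 2)}
    (h : ∀ j i, M₀ j i = 1 → M j i = 1) : tanner M₀ ≤ tanner M := by
  rintro v w (⟨i, j, h1, h2, h3⟩ | ⟨i, j, h1, h2, h3⟩)
  · exact Or.inl ⟨i, j, h1, h2, h j i h3⟩
  · exact Or.inr ⟨i, j, h1, h2, h j i h3⟩

lemma isAcyclic_mono {V : Type*} {G G' : SimpleGraph V} (h : G ≤ G')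
    (hac : G'.IsAcyclic) : G.IsAcyclic := by
  intro v c hc
  exact hac (c.mapLe h) (hc.mapLe h)

/-- a vertex with no incident edges is not on any walk not starting at it -/
lemma not_mem_support_of_isolated [DecidableEq (Option Unit)] {V : Type*} [DecidableEq V] {G : SimpleGraph V} {v x y : V}
    (hiso : ∀ z, ¬ G.Adj v z) (hx : x ≠ v) (w : G.Walk x y) : v ∉ w.support := by
  induction w with
  | nil => simp [Ne.symm hx]
  | cons h w ih =>
    rename_i a b c
    simp only [SimpleGraph.Walk.support_cons, List.mem_cons]
    push_neg
    refine ⟨Ne.symm hx, ih ?_⟩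
    intro hb
    exact hiso a (hb ▸ h.symm)

/-- key separation lemma -/
lemma not_reachable_of_path_through {V : Type*} [DecidableEq V] {G G₀ : SimpleGraph V}
    (hle : G₀ ≤ G) (hac : G.IsAcyclic) {x y v : V}
    (hv : ∀ z, ¬ G₀.Adj v z) (hx : x ≠ v)
    (Q : G.Walk x y) (hQp : Q.IsPath) (hQ : v ∈ Q.support) :
    ¬ G₀.Reachable x y := by
  rintro ⟨w⟩
  have hvP : v ∉ (w.toPath : G₀.Walk x y).support := by
    exact fun hmem => not_mem_support_of_isolated hv hx _ hmem
  set P : G₀.Walk x y := (w.toPath : G₀.Walk x y) with hP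
  have hPpath : P.IsPath := w.toPath.2
  have hP'path : (P.mapLe hle).IsPath := hPpath.mapLe hle
  have := hac.path_unique ⟨P.mapLe hle, hP'path⟩ ⟨Q, hQp⟩
  have hsupp : (P.mapLe hle).support = P.support := by
    simp [SimpleGraph.Walk.support_mapLe_eq_support]
  have hQP : Q = P.mapLe hle := by
    exact (congrArg Subtype.val this).symm
  rw [hQP, hsupp] at hQ
  exact hvP hQ

lemma not_reach_row {M₀ M : Matrix (Fin r) (Fin n) (ZMod 2)}
    (hle : ∀ j i, M₀ j i = 1 → M j i = 1) (hac : (tanner M).IsAcyclic)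
    {j : Fin r} (hrow : ∀ i, M₀ j i = 0) {a b : Fin n}
    (ha : M j a = 1) (hb : M j b = 1) (hab : a ≠ b) :
    ¬ (tanner M₀).Reachable (Sum.inl a) (Sum.inl b) := by
  have hiso : ∀ z, ¬ (tanner M₀).Adj (Sum.inr j) z := by
    rintro z (⟨i, j', h1, h2, h3⟩ | ⟨i, j', h1, h2, h3⟩)
    · exact absurd h1 (by simp)
    · have : j' = j := by simpa using h1.symm
      rw [this, hrow i] at h3
      exact absurd h3 (by decide)
  refine not_reachable_of_path_through (tanner_le hle) hac hiso (by simp)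
    (SimpleGraph.Walk.cons (tanner_adj_lr ha)
      (SimpleGraph.Walk.cons (tanner_adj_rl hb) SimpleGraph.Walk.nil)) ?_ ?_
  · simp [SimpleGraph.Walk.isPath_def, hab]
  · simp

lemma not_reach_row4 {M₀ M : Matrix (Fin r) (Fin n) (ZMod 2)}
    (hle : ∀ j i, M₀ j i = 1 → M j i = 1) (hac : (tanner M).IsAcyclic)
    {j j' : Fin r} (hjj' : j ≠ j') (hrow : ∀ i, M₀ j i = 0) {a i₀ b : Fin n}
    (ha : M j a = 1) (h₀ : M j i₀ = 1) (h₀' : M j' i₀ = 1) (hb : M j' b = 1)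
    (hai : a ≠ i₀) (hbi : b ≠ i₀) (hab : a ≠ b) :
    ¬ (tanner M₀).Reachable (Sum.inl a) (Sum.inl b) := by
  have hiso : ∀ z, ¬ (tanner M₀).Adj (Sum.inr j) z := by
    rintro z (⟨i, j₂, h1, h2, h3⟩ | ⟨i, j₂, h1, h2, h3⟩)
    · exact absurd h1 (by simp)
    · have : j₂ = j := by simpa using h1.symm
      rw [this, hrow i] at h3
      exact absurd h3 (by decide)
  refine not_reachable_of_path_through (tanner_le hle) hac hiso (by simp)
    (SimpleGraph.Walk.cons (tanner_adj_lr ha)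
      (SimpleGraph.Walk.cons (tanner_adj_rl h₀)
        (SimpleGraph.Walk.cons (tanner_adj_lr h₀')
          (SimpleGraph.Walk.cons (tanner_adj_rl hb) SimpleGraph.Walk.nil)))) ?_ ?_
  · simp [SimpleGraph.Walk.isPath_def, hab, hai, hbi, hjj', Ne.symm hbi]
  · simp

end Basic

section Two
variable {r n : ℕ}

lemma mulVec_row_eq {M : Matrix (Fin r) (Fin n) (ZMod 2)} (c : Fin n → ZMod 2) (j : Fin r) :
    M.mulVec c j = ∑ i, (if M j i = 1 then c i else 0) := by
  rw [Matrix.mulVec, dotProduct]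
  refine Finset.sum_congr rfl fun i _ => ?_
  rcases zmod2_cases (M j i) with h | h <;> simp [h]

lemma row_sum_even {M : Matrix (Fin r) (Fin n) (ZMod 2)} {c : Fin n → ZMod 2}
    (hc : M.mulVec c = 0) (j : Fin r) :
    (2 : ℤ) ∣ ∑ i, (if M j i = 1 then ((c i).val : ℤ) else 0) := by
  have h0 : M.mulVec c j = 0 := by rw [hc]; rfl
  rw [mulVec_row_eq] at h0
  refine (ZMod.intCast_zmod_eq_zero_iff_dvd
    (∑ i, (if M j i = 1 then ((c i).val : ℤ) else 0)) 2).mp ?_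
  rw [Int.cast_sum, ← h0]
  refine Finset.sum_congr rfl fun i _ => ?_
  split_ifs
  · rw [Int.cast_natCast, ZMod.natCast_val, ZMod.cast_id]
  · exact Int.cast_zero

lemma codeword_cone {M : Matrix (Fin r) (Fin n) (ZMod 2)} {c : Fin n → ZMod 2}
    (hc : M.mulVec c = 0) (j : Fin r) (i : Fin n) :
    (if M j i = 1 then ((c i).val : ℤ) else 0) ≤
      ∑ l ∈ Finset.univ.erase i, (if M j l = 1 then ((c l).val : ℤ) else 0) := by
  have hnn : (0:ℤ) ≤ ∑ l ∈ Finset.univ.erase i, (if M j l = 1 then ((c l).val : ℤ) else 0) :=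
    Finset.sum_nonneg fun l _ => by split_ifs <;> positivity
  by_cases h1 : M j i = 1
  · rcases zmod2_cases (c i) with h2 | h2
    · rw [if_pos h1, h2]
      simpa using hnn
    · rw [if_pos h1, h2]
      have hv1 : (((1 : ZMod 2)).val : ℤ) = 1 := rfl
      rw [hv1]
      have heven := row_sum_even hc j
      rw [← Finset.add_sum_erase _ _ (Finset.mem_univ i)] at heven
      rw [if_pos h1, h2, hv1] at heven
      omega
  · rw [if_neg h1]
    exact hnn

lemma comb_isPseudo {H : Matrix (Fin r) (Fin n) (ZMod 2)} {p : Fin n → ℤ}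
    (h : isComb H p) : isPseudo H p := by
  obtain ⟨a, ha⟩ := h
  set b : (Fin n → ZMod 2) → ℤ := fun c => if H.mulVec c = 0 then (a c : ℤ) else 0 with hb
  have hb0 : ∀ c, 0 ≤ b c := fun c => by simp only [hb]; split_ifs <;> positivity
  have key : ∀ i, p i = ∑ c : Fin n → ZMod 2, b c * ((c i).val : ℤ) := by
    intro i; rw [ha i]
    refine Finset.sum_congr rfl fun c _ => ?_
    simp only [hb]; split_ifs <;> simp
  refine ⟨⟨?_, ?_⟩, ?_⟩
  · intro i; rw [key i]
    exact Finset.sum_nonneg fun c _ => mul_nonneg (hb0 c) (by positivity)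
  · intro j i
    have lhs_eq : (if H j i = 1 then p i else 0)
        = ∑ c : Fin n → ZMod 2, b c * (if H j i = 1 then ((c i).val:ℤ) else 0) := by
      by_cases h : H j i = 1 <;> simp [h, key i]
    have rhs_eq : ∑ l ∈ Finset.univ.erase i, (if H j l = 1 then p l else 0)
        = ∑ c : Fin n → ZMod 2, ∑ l ∈ Finset.univ.erase i,
            b c * (if H j l = 1 then ((c l).val:ℤ) else 0) := by
      rw [Finset.sum_comm]
      refine Finset.sum_congr rfl fun l _ => ?_
      by_cases h : H j l = 1 <;> simp [h, key l]
    rw [lhs_eq, rhs_eq]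
    refine Finset.sum_le_sum fun c _ => ?_
    by_cases hcw : H.mulVec c = 0
    · rw [← Finset.mul_sum]
      exact mul_le_mul_of_nonneg_left (codeword_cone hcw j i) (hb0 c)
    · simp [hb, hcw]
  · intro j
    have eq1 : ∑ i, (if H j i = 1 then p i else 0)
        = ∑ c : Fin n → ZMod 2, ∑ i, b c * (if H j i = 1 then ((c i).val:ℤ) else 0) := by
      rw [Finset.sum_comm]
      refine Finset.sum_congr rfl fun i _ => ?_
      by_cases h : H j i = 1 <;> simp [h, key i]
    rw [eq1]
    refine Int.emod_eq_zero_of_dvd (Finset.dvd_sum fun c _ => ?_)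
    rw [← Finset.mul_sum]
    by_cases hcw : H.mulVec c = 0
    · exact Dvd.dvd.mul_left (row_sum_even hcw j) _
    · simp [hb, hcw]

end Two


section Decomp
variable {r₁ n : ℕ}

def onesCount (M : Matrix (Fin r₁) (Fin n) (ZMod 2)) : ℕ :=
  ∑ j, (Finset.univ.filter fun i => M j i = 1).card

lemma exists_decomp :
    ∀ (E : ℕ) (M : Matrix (Fin r₁) (Fin n) (ZMod 2)), onesCount M ≤ E →
      (tanner M).IsAcyclic →
      ∀ p : Fin n → ℤ, isPseudo M p → ∀ i₀ : Fin n, 1 ≤ p i₀ →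
      ∃ c : Fin n → ZMod 2, M.mulVec c = 0 ∧ c i₀ = 1 ∧
        (∀ i, c i ≠ 0 → 1 ≤ p i ∧ (tanner M).Reachable (Sum.inl i₀) (Sum.inl i)) ∧
        isPseudo M (fun i => p i - ((c i).val : ℤ)) := by
  intro E
  induction E using Nat.strong_induction_on with
  | _ E IH =>
  intro M hcount hac p hp i₀ hpi₀
  classical
  obtain ⟨⟨hnn, hcone⟩, hpar⟩ := hp
  set J : Finset (Fin r₁) := Finset.univ.filter (fun j => M j i₀ = 1) with hJdef
  have hJmem : ∀ j, j ∈ J ↔ M j i₀ = 1 := by intro j; simp [hJdef]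
  set M₀ : Matrix (Fin r₁) (Fin n) (ZMod 2) :=
    Matrix.of (fun j i => if M j i₀ = 1 then 0 else M j i) with hM₀def
  have hM₀app : ∀ j i, M₀ j i = if M j i₀ = 1 then 0 else M j i := fun j i => rfl
  have h01 : (0 : ZMod 2) ≠ 1 := by decide
  have hle : ∀ j i, M₀ j i = 1 → M j i = 1 := by
    intro j i h
    rw [hM₀app] at h
    by_cases hj : M j i₀ = 1
    · rw [if_pos hj] at h; exact absurd h h01
    · rwa [if_neg hj] at h
  have hM₀J : ∀ j, M j i₀ = 1 → ∀ i, M₀ j i = 0 := by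
    intro j hj i; rw [hM₀app, if_pos hj]
  have hM₀nJ : ∀ j, ¬ M j i₀ = 1 → ∀ i, M₀ j i = M j i := by
    intro j hj i; rw [hM₀app, if_neg hj]
  have hac₀ : (tanner M₀).IsAcyclic := isAcyclic_mono (tanner_le hle) hac
  have hps₀ : isPseudo M₀ p := by
    refine ⟨⟨hnn, ?_⟩, ?_⟩
    · intro j i
      by_cases hj : M j i₀ = 1
      · have hz : ∀ l, ¬ M₀ j l = 1 := fun l => by rw [hM₀J j hj l]; exact h01
        rw [if_neg (hz i)]
        exact Finset.sum_nonneg fun l _ => by rw [if_neg (hz l)]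
      · simp only [hM₀nJ j hj]
        exact hcone j i
    · intro j
      by_cases hj : M j i₀ = 1
      · have hz : ∀ l, ¬ M₀ j l = 1 := fun l => by rw [hM₀J j hj l]; exact h01
        rw [Finset.sum_eq_zero fun l _ => if_neg (hz l)]
        rfl
      · simp only [hM₀nJ j hj]
        exact hpar j
  have hrec : ∀ j : Fin r₁, ∃ (lj : Fin n) (cj : Fin n → ZMod 2), M j i₀ = 1 →
      (M j lj = 1 ∧ lj ≠ i₀) ∧
      (∀ l, l ≠ i₀ → M j l = 1 → p l ≤ p lj) ∧
      1 ≤ p lj ∧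
      M₀.mulVec cj = 0 ∧ cj lj = 1 ∧
      (∀ i, cj i ≠ 0 → 1 ≤ p i ∧ (tanner M₀).Reachable (Sum.inl lj) (Sum.inl i)) ∧
      isPseudo M₀ (fun i => p i - ((cj i).val : ℤ)) := by
    intro j
    by_cases hj : M j i₀ = 1
    swap
    · exact ⟨i₀, 0, fun h => absurd h hj⟩
    · set S : Finset (Fin n) := (Finset.univ.erase i₀).filter (fun l => M j l = 1) with hSdef
      have hSmem : ∀ l, l ∈ S ↔ (l ≠ i₀ ∧ M j l = 1) := by
        intro l
        rw [hSdef, Finset.mem_filter, Finset.mem_erase]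
        simp
      have hcone0 := hcone j i₀
      rw [if_pos hj] at hcone0
      have hSne : S.Nonempty := by
        by_contra hS
        rw [Finset.not_nonempty_iff_eq_empty] at hS
        have hzero : ∑ l ∈ Finset.univ.erase i₀, (if M j l = 1 then p l else 0) = 0 := by
          refine Finset.sum_eq_zero fun l hl => ?_
          refine if_neg fun hMl => ?_
          have : l ∈ S := (hSmem l).2 ⟨(Finset.mem_erase.mp hl).1, hMl⟩
          rw [hS] at this
          exact absurd this (Finset.notMem_empty l)
        omega
      obtain ⟨lj, hljS, hmax⟩ := Finset.exists_max_image S p hSne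
      obtain ⟨hlji, hlj1⟩ := (hSmem lj).1 hljS
      have hmax' : ∀ l, l ≠ i₀ → M j l = 1 → p l ≤ p lj :=
        fun l h1 h2 => hmax l ((hSmem l).2 ⟨h1, h2⟩)
      have hplj : 1 ≤ p lj := by
        by_contra hneg
        push_neg at hneg
        have hle0 : ∑ l ∈ Finset.univ.erase i₀, (if M j l = 1 then p l else 0) ≤ 0 := by
          refine Finset.sum_nonpos fun l hl => ?_
          split_ifs with hMl
          · exact le_trans (hmax' l (Finset.mem_erase.mp hl).1 hMl) (by omega)
          · exact le_refl 0
        omega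
      have hlt : onesCount M₀ < onesCount M := by
        refine Finset.sum_lt_sum (fun j' _ => Finset.card_le_card ?_)
          ⟨j, Finset.mem_univ j, ?_⟩
        · intro i hi
          rw [Finset.mem_filter] at hi ⊢
          exact ⟨hi.1, hle j' i hi.2⟩
        · have h1 : (Finset.univ.filter fun i => M₀ j i = 1) = ∅ := by
            refine Finset.filter_eq_empty_iff.mpr fun i _ => ?_
            rw [hM₀J j hj i]; exact h01
          rw [h1, Finset.card_empty]
          refine Finset.card_pos.mpr ⟨i₀, ?_⟩
          rw [Finset.mem_filter]
          exact ⟨Finset.mem_univ i₀, hj⟩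
      obtain ⟨cj, hc1, hc2, hc3, hc4⟩ :=
        IH (onesCount M₀) (lt_of_lt_of_le hlt hcount) M₀ le_rfl hac₀ p hps₀ lj hplj
      exact ⟨lj, cj, fun _ => ⟨⟨hlj1, hlji⟩, hmax', hplj, hc1, hc2, hc3, hc4⟩⟩
  choose lf cf hlc using hrec
  have hl1 : ∀ j, M j i₀ = 1 → M j (lf j) = 1 := fun j hj => ((hlc j hj).1).1
  have hl2 : ∀ j, M j i₀ = 1 → lf j ≠ i₀ := fun j hj => ((hlc j hj).1).2
  have hlmax : ∀ j, M j i₀ = 1 → ∀ l, l ≠ i₀ → M j l = 1 → p l ≤ p (lf j) :=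
    fun j hj => (hlc j hj).2.1
  have hcw : ∀ j, M j i₀ = 1 → M₀.mulVec (cf j) = 0 := fun j hj => (hlc j hj).2.2.2.1
  have hcl : ∀ j, M j i₀ = 1 → cf j (lf j) = 1 := fun j hj => (hlc j hj).2.2.2.2.1
  have hsupp : ∀ j, M j i₀ = 1 → ∀ i, cf j i ≠ 0 →
      1 ≤ p i ∧ (tanner M₀).Reachable (Sum.inl (lf j)) (Sum.inl i) :=
    fun j hj => (hlc j hj).2.2.2.2.2.1
  have hpse : ∀ j, M j i₀ = 1 → isPseudo M₀ (fun i => p i - ((cf j i).val : ℤ)) :=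
    fun j hj => (hlc j hj).2.2.2.2.2.2
  have keyA : ∀ j, M j i₀ = 1 → ∀ a b, M j a = 1 → M j b = 1 → a ≠ b →
      ¬ (tanner M₀).Reachable (Sum.inl a) (Sum.inl b) :=
    fun j hj a b ha hb hab => not_reach_row hle hac (hM₀J j hj) ha hb hab
  have keyBit : ∀ (a : Fin n) (j j' : Fin r₁), j ≠ j' → M j i₀ = 1 → M j' i₀ = 1 →
      M j a = 1 → M j' a = 1 → a = i₀ := by
    intro a j j' hjj hj hj' ha ha'
    by_contra hai
    set M₁ : Matrix (Fin r₁) (Fin n) (ZMod 2) :=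
      Matrix.of (fun j₂ i => if j₂ = j then 0 else M j₂ i) with hM₁
    have hM₁app : ∀ j₂ i, M₁ j₂ i = if j₂ = j then 0 else M j₂ i := fun _ _ => rfl
    have hle₁ : ∀ j₂ i, M₁ j₂ i = 1 → M j₂ i = 1 := by
      intro j₂ i h
      rw [hM₁app] at h
      by_cases h2 : j₂ = j
      · rw [if_pos h2] at h; exact absurd h h01
      · rwa [if_neg h2] at h
    have hrow₁ : ∀ i, M₁ j i = 0 := fun i => by rw [hM₁app, if_pos rfl]
    have hadj1 : M₁ j' i₀ = 1 := by rw [hM₁app, if_neg (Ne.symm hjj)]; exact hj'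
    have hadj2 : M₁ j' a = 1 := by rw [hM₁app, if_neg (Ne.symm hjj)]; exact ha'
    have hreach : (tanner M₁).Reachable (Sum.inl i₀) (Sum.inl a) :=
      ⟨SimpleGraph.Walk.cons (tanner_adj_lr hadj1)
        (SimpleGraph.Walk.cons (tanner_adj_rl hadj2) SimpleGraph.Walk.nil)⟩
    exact not_reach_row hle₁ hac hrow₁ hj ha (Ne.symm hai) hreach
  have keyB : ∀ j j', j ≠ j' → M j i₀ = 1 → M j' i₀ = 1 → ∀ a b, M j a = 1 → a ≠ i₀ →
      M j' b = 1 → b ≠ i₀ → ¬ (tanner M₀).Reachable (Sum.inl a) (Sum.inl b) := by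
    intro j j' hjj hj hj' a b ha hai hb hbi
    have hab : a ≠ b := fun h => hai (keyBit a j j' hjj hj hj' ha (h ▸ hb))
    exact not_reach_row4 hle hac hjj (hM₀J j hj) ha hj hj' hb hai hbi hab
  set c : Fin n → ZMod 2 := fun i => (if i = i₀ then 1 else 0) + ∑ j ∈ J, cf j i with hcdef
  have capp : ∀ i, c i = (if i = i₀ then 1 else 0) + ∑ j ∈ J, cf j i := fun _ => rfl
  have cval0 : c i₀ = 1 := by
    have hz : ∀ j ∈ J, cf j i₀ = 0 := by
      intro j hjJ
      have hj := (hJmem j).1 hjJ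
      by_contra hne
      exact keyA j hj (lf j) i₀ (hl1 j hj) hj (hl2 j hj) ((hsupp j hj i₀ hne).2)
    rw [capp, if_pos rfl, Finset.sum_eq_zero hz, add_zero]
  have cvalL : ∀ j, M j i₀ = 1 → c (lf j) = 1 := by
    intro j hj
    have hjJ : j ∈ J := (hJmem j).2 hj
    have hsum : ∑ j' ∈ J, cf j' (lf j) = 1 := by
      rw [Finset.sum_eq_single_of_mem j hjJ]
      · exact hcl j hj
      · intro j' hj'J hne
        by_contra h0
        have hj' := (hJmem j').1 hj'J
        exact keyB j' j hne hj' hj (lf j') (lf j) (hl1 j' hj') (hl2 j' hj')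
          (hl1 j hj) (hl2 j hj) ((hsupp j' hj' (lf j) h0).2)
    rw [capp, if_neg (hl2 j hj), hsum, zero_add]
  have cvalO : ∀ j, M j i₀ = 1 → ∀ m, M j m = 1 → m ≠ i₀ → m ≠ lf j → c m = 0 := by
    intro j hj m hm hmi hml
    have hz : ∀ j' ∈ J, cf j' m = 0 := by
      intro j' hj'J
      have hj' := (hJmem j').1 hj'J
      by_contra h0
      have hr := (hsupp j' hj' m h0).2
      by_cases hjj : j' = j
      · subst hjj
        exact keyA j' hj' (lf j') m (hl1 j' hj') hm (fun h => hml h.symm) hr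
      · exact keyB j' j hjj hj' hj (lf j') m (hl1 j' hj') (hl2 j' hj') hm hmi hr
    rw [capp, if_neg hmi, Finset.sum_eq_zero hz, add_zero]
  have crowvals : ∀ j, M j i₀ = 1 → ∀ i, M j i = 1 →
      ((c i).val : ℤ) = (if i = i₀ then 1 else 0) + (if i = lf j then 1 else 0) := by
    intro j hj i hi
    by_cases h1 : i = i₀
    · subst h1
      rw [cval0, if_pos rfl, if_neg (Ne.symm (hl2 j hj))]
      rfl
    · by_cases h2 : i = lf j
      · subst h2
        rw [cvalL j hj, if_neg h1, if_pos rfl]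
        rfl
      · rw [cvalO j hj i hi h1 h2, if_neg h1, if_neg h2]
        rfl
  have hkept : ∀ j, ¬ M j i₀ = 1 →
      (∀ i, M j i = 1 → c i = 0) ∨
      (∃ j₀, M j₀ i₀ = 1 ∧ ∀ i, M j i = 1 → c i = cf j₀ i) := by
    intro j hj
    by_cases hex : ∃ j₀, M j₀ i₀ = 1 ∧ ∃ a, M j a = 1 ∧ cf j₀ a ≠ 0
    · obtain ⟨j₀, hj₀, a, hja, ha0⟩ := hex
      right
      refine ⟨j₀, hj₀, fun i hi => ?_⟩
      have hne : i ≠ i₀ := fun h => hj (h ▸ hi)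
      have hz : ∀ j' ∈ J, j' ≠ j₀ → cf j' i = 0 := by
        intro j' hj'J hne'
        have hj' := (hJmem j').1 hj'J
        by_contra h0
        have r1 : (tanner M₀).Reachable (Sum.inl (lf j')) (Sum.inl i) :=
          (hsupp j' hj' i h0).2
        have r2 : (tanner M₀).Reachable (Sum.inl (lf j₀)) (Sum.inl a) :=
          (hsupp j₀ hj₀ a ha0).2
        have hMa : M₀ j a = 1 := by rw [hM₀nJ j hj a]; exact hja
        have hMi : M₀ j i = 1 := by rw [hM₀nJ j hj i]; exact hi
        have r3 : (tanner M₀).Reachable (Sum.inl a) (Sum.inl i) :=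
          ⟨SimpleGraph.Walk.cons (tanner_adj_lr hMa)
            (SimpleGraph.Walk.cons (tanner_adj_rl hMi) SimpleGraph.Walk.nil)⟩
        have hcomp : (tanner M₀).Reachable (Sum.inl (lf j₀)) (Sum.inl (lf j')) :=
          (r2.trans r3).trans r1.symm
        exact keyB j₀ j' (Ne.symm hne') hj₀ hj' (lf j₀) (lf j') (hl1 j₀ hj₀)
          (hl2 j₀ hj₀) (hl1 j' hj') (hl2 j' hj') hcomp
      have hj₀J : j₀ ∈ J := (hJmem j₀).2 hj₀
      rw [capp, if_neg hne, zero_add,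
        Finset.sum_eq_single_of_mem j₀ hj₀J (fun j' h1 h2 => hz j' h1 h2)]
    · left
      push_neg at hex
      intro i hi
      have hne : i ≠ i₀ := fun h => hj (h ▸ hi)
      rw [capp, if_neg hne, zero_add]
      refine Finset.sum_eq_zero fun j' hj'J => ?_
      exact hex j' ((hJmem j').1 hj'J) i hi
  have hcode : M.mulVec c = 0 := by
    funext j
    show M.mulVec c j = 0
    rw [mulVec_row_eq]
    by_cases hj : M j i₀ = 1
    · have hterm : ∀ i : Fin n, (if M j i = 1 then c i else 0)
          = (if i = i₀ then (1 : ZMod 2) else 0) + (if i = lf j then 1 else 0) := by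
        intro i
        by_cases h1 : i = i₀
        · subst h1
          rw [if_pos hj, cval0, if_pos rfl, if_neg (Ne.symm (hl2 j hj)), add_zero]
        · by_cases h2 : i = lf j
          · subst h2
            rw [if_pos (hl1 j hj), cvalL j hj, if_neg h1, if_pos rfl, zero_add]
          · rw [if_neg h1, if_neg h2, add_zero]
            by_cases h3 : M j i = 1
            · rw [if_pos h3, cvalO j hj i h3 h1 h2]
            · rw [if_neg h3]
      rw [Finset.sum_congr rfl (fun i _ => hterm i), Finset.sum_add_distrib,
        Finset.sum_ite_eq' Finset.univ i₀ (fun _ => (1 : ZMod 2)),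
        Finset.sum_ite_eq' Finset.univ (lf j) (fun _ => (1 : ZMod 2))]
      simp
      decide
    · have hterm : ∀ i : Fin n, (if M j i = 1 then c i else 0)
          = ∑ j' ∈ J, (if M₀ j i = 1 then cf j' i else 0) := by
        intro i
        by_cases h3 : M j i = 1
        · have h3' : M₀ j i = 1 := by rw [hM₀nJ j hj i]; exact h3
          have hne : i ≠ i₀ := fun h => hj (h ▸ h3)
          rw [if_pos h3, capp, if_neg hne, zero_add]
          exact Finset.sum_congr rfl fun j' _ => (if_pos h3').symm
        · have h3' : ¬ M₀ j i = 1 := by rw [hM₀nJ j hj i]; exact h3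
          rw [if_neg h3]
          exact (Finset.sum_eq_zero fun j' _ => if_neg h3').symm
      rw [Finset.sum_congr rfl (fun i _ => hterm i), Finset.sum_comm]
      refine Finset.sum_eq_zero fun j' hj'J => ?_
      have h0 : M₀.mulVec (cf j') j = 0 := by
        rw [hcw j' ((hJmem j').1 hj'J)]; rfl
      rw [mulVec_row_eq] at h0
      exact h0
  have hsub : ∀ i, c i ≠ 0 → 1 ≤ p i ∧ (tanner M).Reachable (Sum.inl i₀) (Sum.inl i) := by
    intro i hci
    by_cases h1 : i = i₀
    · subst h1
      exact ⟨hpi₀, SimpleGraph.Reachable.refl _⟩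
    · have hex : ∃ j ∈ J, cf j i ≠ 0 := by
        by_contra hno
        push_neg at hno
        exact hci (by rw [capp, if_neg h1, Finset.sum_eq_zero hno, add_zero])
      obtain ⟨j, hjJ, h0⟩ := hex
      have hj := (hJmem j).1 hjJ
      obtain ⟨hp1, hr⟩ := hsupp j hj i h0
      refine ⟨hp1, ?_⟩
      have r1 : (tanner M).Reachable (Sum.inl i₀) (Sum.inl (lf j)) :=
        ⟨SimpleGraph.Walk.cons (tanner_adj_lr hj)
          (SimpleGraph.Walk.cons (tanner_adj_rl (hl1 j hj)) SimpleGraph.Walk.nil)⟩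
      exact r1.trans (hr.mono (tanner_le hle))
  have hq0 : ∀ i, 0 ≤ p i - ((c i).val : ℤ) := by
    intro i
    rcases zmod2_cases (c i) with h | h
    · rw [h]
      have := hnn i
      have hv : (((0 : ZMod 2)).val : ℤ) = 0 := rfl
      omega
    · have h1 := (hsub i (by rw [h]; exact one_ne_zero)).1
      rw [h]
      have hv : (((1 : ZMod 2)).val : ℤ) = 1 := rfl
      omega
  have hsplit : ∀ (j : Fin r₁) (s : Finset (Fin n)),
      ∑ l ∈ s, (if M j l = 1 then p l - ((c l).val : ℤ) else 0)
        = ∑ l ∈ s, (if M j l = 1 then p l else 0)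
          - ∑ l ∈ s, (if M j l = 1 then ((c l).val : ℤ) else 0) := by
    intro j s
    rw [← Finset.sum_sub_distrib]
    refine Finset.sum_congr rfl fun l _ => ?_
    split_ifs <;> simp
  refine ⟨c, hcode, cval0, hsub, ⟨⟨fun i => hq0 i, ?_⟩, ?_⟩⟩
  · -- cone
    intro j m
    simp only
    by_cases hm : M j m = 1
    swap
    · rw [if_neg hm]
      refine Finset.sum_nonneg fun l _ => ?_
      split_ifs with h
      exacts [hq0 l, le_refl 0]
    rw [if_pos hm, hsplit j]
    by_cases hj : M j i₀ = 1
    · have hV : ∑ l ∈ Finset.univ.erase m, (if M j l = 1 then ((c l).val : ℤ) else 0)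
          = (if i₀ ∈ Finset.univ.erase m then (1:ℤ) else 0)
            + (if lf j ∈ Finset.univ.erase m then (1:ℤ) else 0) := by
        have hterm : ∀ l, (if M j l = 1 then ((c l).val : ℤ) else 0)
            = (if l = i₀ then (1:ℤ) else 0) + (if l = lf j then (1:ℤ) else 0) := by
          intro l
          by_cases h3 : M j l = 1
          · rw [if_pos h3, crowvals j hj l h3]
          · rw [if_neg h3, if_neg (fun h : l = i₀ => h3 (h ▸ hj)),
              if_neg (fun h : l = lf j => h3 (h ▸ hl1 j hj)), add_zero]
        rw [Finset.sum_congr rfl fun l _ => hterm l, Finset.sum_add_distrib,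
          Finset.sum_ite_eq' _ i₀ (fun _ => (1:ℤ)),
          Finset.sum_ite_eq' _ (lf j) (fun _ => (1:ℤ))]
      rw [hV]
      have hcone_m := hcone j m
      rw [if_pos hm] at hcone_m
      by_cases h1 : m = i₀
      · rw [if_neg (show i₀ ∉ Finset.univ.erase m by simp [h1]),
          if_pos (show lf j ∈ Finset.univ.erase m by simp [h1, hl2 j hj])]
        have hc1 : ((c m).val : ℤ) = 1 := by rw [h1, cval0]; rfl
        omega
      · by_cases h2 : m = lf j
        · rw [if_pos (show i₀ ∈ Finset.univ.erase m by simp [h2, Ne.symm (hl2 j hj)]),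
            if_neg (show lf j ∉ Finset.univ.erase m by simp [h2])]
          have hc1 : ((c m).val : ℤ) = 1 := by rw [h2, cvalL j hj]; rfl
          omega
        · rw [if_pos (show i₀ ∈ Finset.univ.erase m by simp [Ne.symm h1]),
            if_pos (show lf j ∈ Finset.univ.erase m by simp [Ne.symm h2])]
          have hc0 : ((c m).val : ℤ) = 0 := by rw [cvalO j hj m hm h1 h2]; rfl
          have hfull := hpar j
          rw [← Finset.add_sum_erase _ _ (Finset.mem_univ m), if_pos hm] at hfull
          have hi₀m : i₀ ∈ Finset.univ.erase m := by simp [Ne.symm h1]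
          have hT1 := Finset.add_sum_erase (Finset.univ.erase m)
            (fun l => if M j l = 1 then p l else 0) hi₀m
          have hlfmem : lf j ∈ (Finset.univ.erase m).erase i₀ := by
            simp [hl2 j hj, Ne.symm h2]
          have hT2 : (if M j (lf j) = 1 then p (lf j) else 0)
              ≤ ∑ l ∈ (Finset.univ.erase m).erase i₀, (if M j l = 1 then p l else 0) := by
            refine Finset.single_le_sum (f := fun l => if M j l = 1 then p l else 0)
              (fun l _ => ?_) hlfmem
            split_ifs with h
            exacts [hnn l, le_refl 0]
          rw [if_pos (hl1 j hj)] at hT2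
          simp only [if_pos hj] at hT1
          have hpm : p m ≤ p (lf j) := hlmax j hj m h1 hm
          omega
    · rcases hkept j hj with hzero | ⟨j₀, hj₀, hcf⟩
      · have hcz : ∑ l ∈ Finset.univ.erase m, (if M j l = 1 then ((c l).val : ℤ) else 0) = 0 := by
          refine Finset.sum_eq_zero fun l _ => ?_
          by_cases h3 : M j l = 1
          · rw [if_pos h3, hzero l h3]; rfl
          · rw [if_neg h3]
        rw [hcz, hzero m hm]
        have hcone_m := hcone j m
        rw [if_pos hm] at hcone_m
        have : (((0 : ZMod 2)).val : ℤ) = 0 := rfl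
        omega
      · have hps := (hpse j₀ hj₀).1.2 j m
        have hMM : ∀ l, M₀ j l = M j l := hM₀nJ j hj
        simp only [hMM, if_pos hm] at hps
        have hterm2 : ∀ l, (if M j l = 1 then p l - ((cf j₀ l).val : ℤ) else 0)
            = (if M j l = 1 then p l - ((c l).val : ℤ) else 0) := by
          intro l
          by_cases h3 : M j l = 1
          · rw [if_pos h3, if_pos h3, hcf l h3]
          · rw [if_neg h3, if_neg h3]
        have hsum : ∑ l ∈ Finset.univ.erase m, (if M j l = 1 then p l - ((cf j₀ l).val : ℤ) else 0)
            = (∑ l ∈ Finset.univ.erase m, (if M j l = 1 then p l else 0))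
              - ∑ l ∈ Finset.univ.erase m, (if M j l = 1 then ((c l).val : ℤ) else 0) := by
          rw [Finset.sum_congr rfl fun l _ => hterm2 l, hsplit j]
        rw [hcf m hm, ← hsum]
        exact hps
  · -- parity
    intro j
    simp only
    rw [hsplit j]
    have h2 := row_sum_even hcode j
    have h1 := hpar j
    omega

end Decomp

lemma pseudo_isComb_of_acyclic {r₁ n : ℕ} (M : Matrix (Fin r₁) (Fin n) (ZMod 2))
    (hforest : (tanner M).IsAcyclic) :
    ∀ (N : ℕ) (p : Fin n → ℤ), isPseudo M p → (∑ i, p i).toNat ≤ N →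
    ∃ a : (Fin n → ZMod 2) → ℕ, ∀ i, p i =
      ∑ c : Fin n → ZMod 2,
        (if M.mulVec c = 0 then (a c : ℤ) * ((c i).val : ℤ) else 0) := by
  intro N
  induction N with
  | zero =>
    intro p hp hN
    have hz : ∀ i, p i = 0 := by
      intro i
      have h1 := hp.1.1
      have h00 := h1 i
      have hle := Finset.single_le_sum (fun l (_ : l ∈ Finset.univ) => h1 l) (Finset.mem_univ i)
      have hge : (0:ℤ) ≤ ∑ i, p i := Finset.sum_nonneg fun l _ => h1 l
      omega
    exact ⟨fun _ => 0, fun i => by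
      rw [hz i]
      symm
      refine Finset.sum_eq_zero fun x _ => ?_
      split_ifs <;> simp⟩
  | succ N IH =>
    intro p hp hN
    by_cases hallz : ∀ i, p i = 0
    · exact ⟨fun _ => 0, fun i => by
        rw [hallz i]
        symm
        refine Finset.sum_eq_zero fun x _ => ?_
        split_ifs <;> simp⟩
    · push_neg at hallz
      obtain ⟨i₀, hi₀⟩ := hallz
      have hpi₀ : 1 ≤ p i₀ := by have := hp.1.1 i₀; omega
      obtain ⟨c, hcw, hci₀, hcs, hq⟩ :=
        exists_decomp (onesCount M) M le_rfl hforest p hp i₀ hpi₀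
      have hS1 : (1:ℤ) ≤ ∑ i, ((c i).val : ℤ) := by
        have h := Finset.single_le_sum (f := fun i => ((c i).val : ℤ))
          (fun l (_ : l ∈ Finset.univ) => by positivity) (Finset.mem_univ i₀)
        have hv : (((c i₀)).val : ℤ) = 1 := by rw [hci₀]; rfl
        rw [hv] at h
        exact h
      have hsq : ∑ i, (p i - ((c i).val : ℤ)) = ∑ i, p i - ∑ i, ((c i).val : ℤ) :=
        Finset.sum_sub_distrib _ _
      have hq0 : (0:ℤ) ≤ ∑ i, (p i - ((c i).val : ℤ)) :=
        Finset.sum_nonneg fun l _ => hq.1.1 l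
      have hp0 : (0:ℤ) ≤ ∑ i, p i := Finset.sum_nonneg fun l _ => hp.1.1 l
      have hNq : (∑ i, (p i - ((c i).val : ℤ))).toNat ≤ N := by omega
      obtain ⟨a, ha⟩ := IH (fun i => p i - ((c i).val : ℤ)) hq hNq
      refine ⟨fun x => a x + (if x = c then 1 else 0), fun i => ?_⟩
      have hsplit : ∀ x : Fin n → ZMod 2,
          (if M.mulVec x = 0
            then (((a x + (if x = c then 1 else 0) : ℕ)) : ℤ) * ((x i).val : ℤ) else 0)
          = (if M.mulVec x = 0 then (a x : ℤ) * ((x i).val : ℤ) else 0)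
            + (if x = c then (if M.mulVec x = 0 then ((x i).val : ℤ) else 0) else 0) := by
        intro x
        by_cases h2 : x = c
        · subst h2
          simp only [if_pos rfl]
          split_ifs with h1 <;> first | (push_cast; ring) | simp
        · simp only [if_neg h2]
          split_ifs with h1 <;> first | (push_cast; ring) | simp
      rw [Finset.sum_congr rfl fun x _ => hsplit x, Finset.sum_add_distrib,
        Finset.sum_ite_eq' Finset.univ c
          (fun x => if M.mulVec x = 0 then ((x i).val : ℤ) else 0),
        if_pos (Finset.mem_univ c), if_pos hcw, ← ha i]
      ring

/-- if `H` contains a subset of rows `H₁ = H.submatrix f id` with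
`C(H₁) = C(H)` and `T(H₁)` cycle-free, then the pseudocodewords of `H` are exactly the
nonnegative-integer combinations of codewords of `C(H)`. -/
theorem pseudo_eq_comb_of_acyclic_subrows {r r₁ n : ℕ}
    (H : Matrix (Fin r) (Fin n) (ZMod 2)) (f : Fin r₁ → Fin r)
    (hf : Function.Injective f)
    (hcode : ∀ y : Fin n → ZMod 2, (H.submatrix f id).mulVec y = 0 ↔ H.mulVec y = 0)
    (hforest : (tanner (H.submatrix f id)).IsAcyclic) :
    {p : Fin n → ℤ | isPseudo H p} = {p : Fin n → ℤ | isComb H p} := by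
  ext p
  simp only [Set.mem_setOf_eq]
  constructor
  · intro hp
    have hpM : isPseudo (H.submatrix f id) p := by
      obtain ⟨⟨hnn, hcone⟩, hpar⟩ := hp
      exact ⟨⟨hnn, fun j i => hcone (f j) i⟩, fun j => hpar (f j)⟩
    obtain ⟨a, ha⟩ := pseudo_isComb_of_acyclic (H.submatrix f id) hforest
      (∑ i, p i).toNat p hpM le_rfl
    refine ⟨a, fun i => ?_⟩
    rw [ha i]
    exact Finset.sum_congr rfl fun x _ => if_congr (hcode x) rfl rfl
  · exact comb_isPseudo
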